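/- For all sufficiently large integers d, there exists a subset M ⊆ {0,1}^d such that: (i) |M| ≥ 2^{d/48}; (ii) any two distinct v, v' ∈ M satisfy Hamming distance ‖v − v'‖₀ > d/12; (iii) for every coordinate i ∈ {1,...,d}, 1/24 ≤ (1/|M|)·∑_{v ∈ M} v_i ≤ 3/24. -/

import Mathlib

open Finset

open scoped BigOperators

lemma ball_bound12 (n r : ℕ) (x : Fin n → ZMod 12) :
    (univ.filter fun y : Fin n → ZMod 12 => hammingDist x y ≤ r).card
      ≤ 2 ^ n * 12 ^ r := by
  classical
  have hcard : ((univ : Finset ((Fin n → Bool) × (Fin r → ZMod 12)))).card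
      = 2 ^ n * 12 ^ r := by
    simp [Finset.card_univ]
  rw [← hcard]
  set D : (Fin n → ZMod 12) → Finset (Fin n) :=
    fun y => univ.filter (fun i => y i ≠ x i) with hDdef
  refine Finset.card_le_card_of_injOn
    (fun y => (fun i => decide (y i ≠ x i),
      fun j => (((D y).sort (· ≤ ·)).map y).getD j 0))
    (fun y _ => Finset.mem_univ _) ?_
  intro y1 hy1 y2 hy2 heq
  simp only [Finset.mem_coe, Finset.mem_filter, Finset.mem_univ, true_and] at hy1 hy2
  have h1 := congrArg Prod.fst heq
  have h2 := congrArg Prod.snd heq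
  simp only at h1 h2
  have hD : D y1 = D y2 := by
    ext i
    simp only [hDdef, Finset.mem_filter, Finset.mem_univ, true_and]
    have := congrFun h1 i
    simp only [decide_eq_decide] at this
    exact this
  funext i
  by_cases hi : y1 i = x i
  · have hi2 : y2 i = x i := by
      by_contra hc
      have : i ∈ D y2 := by simp [hDdef, hc]
      rw [← hD] at this
      simp [hDdef, hi] at this
    rw [hi, hi2]
  · have hiD : i ∈ D y1 := by simp [hDdef, hi]
    set L := (D y1).sort (· ≤ ·) with hL
    have hiL : i ∈ L := by rw [hL, Finset.mem_sort]; exact hiD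
    have hlen : L.length = (D y1).card := Finset.length_sort _
    have hcardD : (D y1).card ≤ r := by
      have hDe : D y1 = univ.filter fun j => x j ≠ y1 j := by
        ext j; simp [hDdef, ne_comm]
      rw [hDe]; rw [hammingDist] at hy1; exact hy1
    set k := L.idxOf i with hk
    have hkl : k < L.length := List.idxOf_lt_length_iff.2 hiL
    have hkr : k < r := lt_of_lt_of_le (hlen ▸ hkl) hcardD
    have hLk : L[k] = i := List.getElem_idxOf hkl
    have e1 : (L.map y1).getD k 0 = y1 i := by
      rw [List.getD_eq_getElem _ _ (by simpa using hkl)]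
      simp [hLk]
    have e2 : (L.map y2).getD k 0 = y2 i := by
      rw [List.getD_eq_getElem _ _ (by simpa using hkl)]
      simp [hLk]
    have := congrFun h2 ⟨k, hkr⟩
    simp only at this
    rw [← hD] at this
    rw [← e1, ← e2]
    exact this

def transClosed12 {n : ℕ} (C : Finset (Fin n → ZMod 12)) : Prop :=
  ∀ c ∈ C, ∀ a : ZMod 12, (fun i => c i + a) ∈ C

def goodCode12 {n : ℕ} (C : Finset (Fin n → ZMod 12)) : Prop :=
  transClosed12 C ∧ ∀ c ∈ C, ∀ c' ∈ C, c ≠ c' → n / 2 + 1 ≤ hammingDist c c'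

lemma exists_max_code12 (n : ℕ) (hn : 2 ≤ n) :
    ∃ C : Finset (Fin n → ZMod 12), goodCode12 C ∧
      ∀ x : Fin n → ZMod 12, ∃ c ∈ C, hammingDist c x ≤ n / 2 := by
  classical
  have hne : (univ.filter fun C : Finset (Fin n → ZMod 12) => goodCode12 C).Nonempty := by
    refine ⟨∅, ?_⟩
    simp [goodCode12, transClosed12]
  obtain ⟨C, hCmem, hmax⟩ := Finset.exists_max_image _ Finset.card hne
  rw [Finset.mem_filter] at hCmem
  obtain ⟨-, hCgood⟩ := hCmem
  refine ⟨C, hCgood, ?_⟩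
  intro x
  by_contra hcov
  push_neg at hcov
  set C' := C ∪ (univ.image fun a : ZMod 12 => fun i => x i + a) with hC'
  have hxC' : x ∈ C' := by
    simp only [hC', Finset.mem_union, Finset.mem_image]
    right
    exact ⟨0, Finset.mem_univ _, by funext i; simp⟩
  have hxnC : x ∉ C := by
    intro hx
    have := hcov x hx
    simp at this
  have hdist_trans : ∀ a : ZMod 12, ∀ c ∈ C,
      n / 2 + 1 ≤ hammingDist (fun i => x i + a) c := by
    intro a c hc
    have hc' : (fun i => c i + (-a)) ∈ C := hCgood.1 c hc (-a)
    have := hcov _ hc'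
    have heq : hammingDist (fun i => x i + a) c
        = hammingDist x (fun i => c i + (-a)) := by
      rw [hammingDist, hammingDist]
      congr 1
      ext i
      simp only [Finset.mem_filter, Finset.mem_univ, true_and]
      constructor
      · intro h hcontra; apply h; rw [hcontra]; ring
      · intro h hcontra; apply h; rw [← hcontra]; ring
    rw [heq, hammingDist_comm]
    omega
  have hgood' : goodCode12 C' := by
    constructor
    · intro c hc a
      simp only [hC', Finset.mem_union, Finset.mem_image] at hc ⊢
      rcases hc with hc | ⟨b, -, hb⟩
      · left; exact hCgood.1 c hc a
      · right
        exact ⟨b + a, Finset.mem_univ _, by funext i; rw [← hb]; ring⟩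
    · intro c hc c' hc' hne
      simp only [hC', Finset.mem_union, Finset.mem_image] at hc hc'
      rcases hc with hc | ⟨a, -, ha⟩
      · rcases hc' with hc' | ⟨a', -, ha'⟩
        · exact hCgood.2 c hc c' hc' hne
        · rw [← ha', hammingDist_comm]
          exact hdist_trans a' c hc
      · rcases hc' with hc' | ⟨a', -, ha'⟩
        · rw [← ha]
          exact hdist_trans a c' hc'
        · have haa : a ≠ a' := by
            intro h; apply hne; rw [← ha, ← ha', h]
          have : hammingDist ((fun i => x i + a) : Fin n → ZMod 12)
              (fun i => x i + a') = n := by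
            rw [hammingDist]
            have : (univ.filter fun i : Fin n => x i + a ≠ x i + a') = univ := by
              ext i
              simp only [Finset.mem_filter, Finset.mem_univ, true_and, iff_true]
              intro h
              exact haa (add_left_cancel h)
            rw [this, Finset.card_univ, Fintype.card_fin]
          rw [← ha, ← ha', this]
          omega
  have hlt : C.card < C'.card :=
    Finset.card_lt_card ⟨Finset.subset_union_left, fun hsub => hxnC (hsub hxC')⟩
  have := hmax C' (Finset.mem_filter.2 ⟨Finset.mem_univ _, hgood'⟩)
  omega

lemma code_count12 (n : ℕ) (C : Finset (Fin n → ZMod 12))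
    (hcov : ∀ x : Fin n → ZMod 12, ∃ c ∈ C, hammingDist c x ≤ n / 2) :
    12 ^ n ≤ C.card * (2 ^ n * 12 ^ (n / 2)) := by
  classical
  have hsub : (univ : Finset (Fin n → ZMod 12)) ⊆
      C.biUnion fun c => univ.filter fun y => hammingDist c y ≤ n / 2 := by
    intro x _
    obtain ⟨c, hc, hd⟩ := hcov x
    exact Finset.mem_biUnion.2 ⟨c, hc, by simp [hd]⟩
  calc 12 ^ n = (univ : Finset (Fin n → ZMod 12)).card := by
        simp [Finset.card_univ]
    _ ≤ (C.biUnion fun c => univ.filter fun y => hammingDist c y ≤ n / 2).card :=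
        Finset.card_le_card hsub
    _ ≤ ∑ c ∈ C, (univ.filter fun y => hammingDist c y ≤ n / 2).card :=
        Finset.card_biUnion_le
    _ ≤ ∑ _c ∈ C, 2 ^ n * 12 ^ (n / 2) :=
        Finset.sum_le_sum fun c _ => ball_bound12 n (n / 2) c
    _ = C.card * (2 ^ n * 12 ^ (n / 2)) := by rw [Finset.sum_const, smul_eq_mul]

lemma balance12 (n : ℕ) (C : Finset (Fin n → ZMod 12))
    (htc : transClosed12 C) (j : Fin n) (s : ZMod 12) :
    12 * (C.filter fun c => c j = s).card = C.card := by
  classical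
  have key : ∀ a : ZMod 12, (C.filter fun c => c j = a).card
      = (C.filter fun c => c j = s).card := by
    intro a
    apply Finset.card_bij (fun c _ => fun i => c i + (s - a))
    · intro c hc
      simp only [Finset.mem_filter] at hc ⊢
      refine ⟨htc c hc.1 _, ?_⟩
      rw [hc.2]; ring
    · intro c1 h1 c2 h2 heq
      funext i
      have := congrFun heq i
      simpa using this
    · intro c hc
      simp only [Finset.mem_filter] at hc
      refine ⟨fun i => c i + (a - s),
        Finset.mem_filter.2 ⟨htc c hc.1 _, by simp only []; rw [hc.2]; ring⟩, ?_⟩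
      funext i; ring
  have hpart : C.card = ∑ a : ZMod 12, (C.filter fun c => c j = a).card :=
    Finset.card_eq_sum_card_fiberwise (fun c _ => Finset.mem_univ (c j))
  rw [hpart]
  rw [Finset.sum_congr rfl (fun a _ => key a), Finset.sum_const]
  simp [mul_comm]

lemma size_chain12 (n d K : ℕ) (hn : 1 ≤ n) (hd : d ≤ 12 * n + 11)
    (hK : 12 ^ n ≤ K * (2 ^ n * 12 ^ (n / 2))) :
    (2 : ℝ) ^ ((d : ℝ) / 48) ≤ K := by
  have h3K : (3 : ℝ) ^ ((n : ℝ) / 2) ≤ K := by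
    have hr : (12 : ℝ) ^ (n / 2 : ℕ) ≤ (12 : ℝ) ^ ((n : ℝ) / 2) := by
      rw [← Real.rpow_natCast 12 (n / 2)]
      apply Real.rpow_le_rpow_of_exponent_le (by norm_num)
      rw [le_div_iff₀ (by norm_num : (0:ℝ) < 2)]
      have : (n / 2 : ℕ) * 2 ≤ n := by omega
      exact_mod_cast this
    have hcast : (12 : ℝ) ^ n ≤ (K : ℝ) * ((2 : ℝ) ^ n * (12 : ℝ) ^ (n / 2 : ℕ)) := by
      exact_mod_cast hK
    have hid : (3 : ℝ) ^ ((n : ℝ) / 2) * ((2 : ℝ) ^ n * (12 : ℝ) ^ ((n : ℝ) / 2))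
        = 12 ^ n := by
      rw [show (3 : ℝ) ^ ((n : ℝ) / 2) * ((2 : ℝ) ^ n * (12 : ℝ) ^ ((n : ℝ) / 2))
          = ((3 : ℝ) ^ ((n : ℝ) / 2) * (12 : ℝ) ^ ((n : ℝ) / 2)) * (2 : ℝ) ^ n by ring]
      rw [← Real.mul_rpow (by norm_num) (by norm_num)]
      have h36 : ((3 : ℝ) * 12) ^ ((n : ℝ) / 2) = 6 ^ n := by
        rw [show (3 : ℝ) * 12 = 6 ^ (2 : ℕ) by norm_num,
          ← Real.rpow_natCast (6 : ℝ) 2, ← Real.rpow_mul (by norm_num)]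
        rw [show ((2 : ℕ) : ℝ) * ((n : ℝ) / 2) = (n : ℝ) by push_cast; ring]
        exact Real.rpow_natCast 6 n
      rw [h36, ← mul_pow]
      norm_num
    have hBpos : (0 : ℝ) < (2 : ℝ) ^ n * (12 : ℝ) ^ (n / 2 : ℕ) := by positivity
    have hmul : (3 : ℝ) ^ ((n : ℝ) / 2) * ((2 : ℝ) ^ n * (12 : ℝ) ^ (n / 2 : ℕ))
        ≤ (K : ℝ) * ((2 : ℝ) ^ n * (12 : ℝ) ^ (n / 2 : ℕ)) := by
      calc (3 : ℝ) ^ ((n : ℝ) / 2) * ((2 : ℝ) ^ n * (12 : ℝ) ^ (n / 2 : ℕ))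
          ≤ (3 : ℝ) ^ ((n : ℝ) / 2) * ((2 : ℝ) ^ n * (12 : ℝ) ^ ((n : ℝ) / 2)) := by
            apply mul_le_mul_of_nonneg_left _ (Real.rpow_nonneg (by norm_num) _)
            apply mul_le_mul_of_nonneg_left hr (by positivity)
        _ = 12 ^ n := hid
        _ ≤ (K : ℝ) * ((2 : ℝ) ^ n * (12 : ℝ) ^ (n / 2 : ℕ)) := hcast
    exact le_of_mul_le_mul_right hmul hBpos
  have h23 : (2 : ℝ) ^ ((d : ℝ) / 48) ≤ (3 : ℝ) ^ ((n : ℝ) / 2) := by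
    have e1 : (2 : ℝ) ^ ((d : ℝ) / 48) ≤ (2 : ℝ) ^ (((n : ℝ) + 1) / 4) := by
      apply Real.rpow_le_rpow_of_exponent_le one_le_two
      rw [div_le_div_iff₀ (by norm_num) (by norm_num)]
      have : (d : ℝ) ≤ 12 * n + 11 := by exact_mod_cast hd
      linarith
    have e2 : (2 : ℝ) ^ (((n : ℝ) + 1) / 4) ≤ (3 : ℝ) ^ ((n : ℝ) / 2) := by
      have base : ((2 : ℝ) ^ (n + 1 : ℕ)) ≤ ((3 : ℝ) ^ (2 * n : ℕ)) := by
        have b1 : (2 : ℕ) ^ (n + 1) ≤ 2 ^ (2 * n) :=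
          Nat.pow_le_pow_right (by norm_num) (by omega)
        have b2 : (2 : ℕ) ^ (2 * n) ≤ 3 ^ (2 * n) :=
          Nat.pow_le_pow_left (by norm_num) _
        exact_mod_cast le_trans b1 b2
      have l1 : (2 : ℝ) ^ (((n : ℝ) + 1) / 4)
          = ((2 : ℝ) ^ (n + 1 : ℕ)) ^ ((1 : ℝ) / 4) := by
        rw [← Real.rpow_natCast 2 (n + 1), ← Real.rpow_mul (by norm_num)]
        push_cast
        ring_nf
      have l2 : (3 : ℝ) ^ ((n : ℝ) / 2)
          = ((3 : ℝ) ^ (2 * n : ℕ)) ^ ((1 : ℝ) / 4) := by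
        rw [← Real.rpow_natCast 3 (2 * n), ← Real.rpow_mul (by norm_num)]
        push_cast
        ring_nf
      rw [l1, l2]
      exact Real.rpow_le_rpow (by positivity) base (by norm_num)
    linarith
  linarith


theorem stmt16 :
    ∃ d₀ : ℕ, ∀ d : ℕ, d₀ ≤ d →
      ∃ M : Finset (Fin d → Bool),
        (2 : ℝ) ^ ((d : ℝ) / 48) ≤ M.card ∧
        (∀ v ∈ M, ∀ v' ∈ M, v ≠ v' → (d : ℝ) / 12 < (hammingDist v v' : ℝ)) ∧
        (∀ i : Fin d,
          1 / 24 ≤ (∑ v ∈ M, if v i then (1 : ℝ) else 0) / M.card ∧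
          (∑ v ∈ M, if v i then (1 : ℝ) else 0) / M.card ≤ 3 / 24) := by
  classical
  refine ⟨24, fun d hd => ?_⟩
  set n := d / 12 with hn
  have hn2 : 2 ≤ n := by omega
  have hdn : 12 * n ≤ d := by omega
  have hdn2 : d < 12 * n + 12 := by omega
  have hnpos : 0 < n := by omega
  obtain ⟨C, ⟨htc, hdistC⟩, hcov⟩ := exists_max_code12 n hn2
  have hK : 12 ^ n ≤ C.card * (2 ^ n * 12 ^ (n / 2)) := code_count12 n C hcov
  have hKpos : 0 < C.card := by
    rcases Nat.eq_zero_or_pos C.card with h | h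
    · rw [h, zero_mul] at hK
      exact absurd hK (Nat.not_le.mpr (pow_pos (by norm_num) n))
    · exact h
  -- encode
  set J : Fin d → Fin n := fun i =>
    if h : (i : ℕ) < 12 * n then ⟨(i : ℕ) / 12, by omega⟩ else ⟨0, hnpos⟩ with hJ
  set S : Fin d → ZMod 12 := fun i =>
    if (i : ℕ) < 12 * n then (((i : ℕ) % 12 : ℕ) : ZMod 12) else 0 with hS
  set enc : (Fin n → ZMod 12) → (Fin d → Bool) :=
    fun c i => decide (c (J i) = S i) with henc
  -- key computation: J and S at special positions
  have hpos : ∀ (j : Fin n) (v : ℕ), v < 12 →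
      ∃ i : Fin d, J i = j ∧ S i = (v : ZMod 12) := by
    intro j v hv
    have hlt : 12 * (j : ℕ) + v < 12 * n := by
      have := j.2
      omega
    refine ⟨⟨12 * (j : ℕ) + v, by omega⟩, ?_, ?_⟩
    · simp only [hJ]
      rw [dif_pos hlt]
      ext
      simp only
      omega
    · simp only [hS]
      rw [if_pos hlt]
      congr 1
      omega
  have hencinj : Function.Injective enc := by
    intro c c' h
    funext j
    obtain ⟨i, hJi, hSi⟩ := hpos j (c j).val (ZMod.val_lt (c j))
    have hval : (((c j).val : ℕ) : ZMod 12) = c j := ZMod.natCast_rightInverse (c j)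
    have h2 := congrFun h i
    simp only [henc, decide_eq_decide] at h2
    rw [hJi, hSi, hval] at h2
    exact (h2.mp rfl).symm
  set M := C.image enc with hM
  have hMcard : M.card = C.card := Finset.card_image_of_injective C hencinj
  refine ⟨M, ?_, ?_, ?_⟩
  · -- size
    rw [hMcard]
    exact size_chain12 n d C.card (by omega) (by omega) hK
  · -- distance
    intro v hv v' hv' hvv
    obtain ⟨c, hc, rfl⟩ := Finset.mem_image.1 hv
    obtain ⟨c', hc', rfl⟩ := Finset.mem_image.1 hv'
    have hcc : c ≠ c' := fun h => hvv (by rw [h])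
    have h1 : n / 2 + 1 ≤ hammingDist c c' := hdistC c hc c' hc' hcc
    -- 2 * dist(c,c') ≤ dist(enc c, enc c')
    have h2 : 2 * hammingDist c c' ≤ hammingDist (enc c) (enc c') := by
      have hsrc : ((univ.filter fun j : Fin n => c j ≠ c' j) ×ˢ (univ : Finset Bool)).card
          = hammingDist c c' * 2 := by
        rw [Finset.card_product, hammingDist]
        simp
      rw [mul_comm, ← hsrc, hammingDist]
      refine Finset.card_le_card_of_injOn
        (fun p => ⟨12 * (p.1 : ℕ) + (if p.2 then c p.1 else c' p.1).val,
          by have := p.1.2; have := ZMod.val_lt (if p.2 then c p.1 else c' p.1); omega⟩)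
        ?_ ?_
      · rintro ⟨j, b⟩ hp
        rw [Finset.mem_coe, Finset.mem_product] at hp
        obtain ⟨hj, -⟩ := hp
        rw [Finset.mem_filter] at hj; rw [Finset.mem_coe, Finset.mem_filter]
        obtain ⟨-, hj⟩ := hj
        refine ⟨Finset.mem_univ _, ?_⟩
        have hv12 : (if b then c j else c' j).val < 12 := ZMod.val_lt _
        have hlt : 12 * (j : ℕ) + (if b then c j else c' j).val < 12 * n := by
          have := j.2
          omega
        have hJi : J ⟨12 * (j : ℕ) + (if b then c j else c' j).val, by omega⟩ = j := by
          simp only [hJ]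
          rw [dif_pos hlt]
          ext
          simp only
          omega
        have hSi : S ⟨12 * (j : ℕ) + (if b then c j else c' j).val, by omega⟩
            = if b then c j else c' j := by
          simp only [hS]
          rw [if_pos hlt]
          rw [show (12 * (j : ℕ) + (if b then c j else c' j).val) % 12
              = (if b then c j else c' j).val by omega]
          simp [ZMod.natCast_val, ZMod.cast_id]
        have hEc : enc c ⟨12 * (j : ℕ) + (if b then c j else c' j).val, by omega⟩
            = decide (c j = if b then c j else c' j) := by
          simp only [henc, hJi, hSi]
        have hEc' : enc c' ⟨12 * (j : ℕ) + (if b then c j else c' j).val, by omega⟩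
            = decide (c' j = if b then c j else c' j) := by
          simp only [henc, hJi, hSi]
        dsimp only
        rw [hEc, hEc']
        cases b
        · rw [if_neg (by simp)]
          simp only [ne_eq, decide_eq_decide]
          intro hiff
          exact hj (hiff.mpr trivial)
        · rw [if_pos rfl]
          simp only [ne_eq, decide_eq_decide]
          intro hiff
          exact hj (hiff.mp trivial).symm
      · rintro ⟨j, b⟩ hp ⟨j', b'⟩ hp' heq
        rw [Finset.mem_coe, Finset.mem_product, Finset.mem_filter] at hp hp'
        have hj := hp.1.2
        have hj' := hp'.1.2
        have hval := congrArg Fin.val heq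
        simp only at hval
        have hv1 := ZMod.val_lt (if b then c j else c' j)
        have hv2 := ZMod.val_lt (if b' then c j' else c' j')
        have hjj : (j : ℕ) = (j' : ℕ) := by omega
        have hjeq : j = j' := Fin.ext hjj
        subst hjeq
        have hveq : (if b then c j else c' j).val = (if b' then c j else c' j).val := by
          omega
        have : (if b then c j else c' j) = (if b' then c j else c' j) :=
          ZMod.val_injective _ hveq
        cases b <;> cases b' <;> simp_all
    have h3 : (n : ℝ) + 1 ≤ (hammingDist (enc c) (enc c') : ℝ) := by
      have : n + 1 ≤ hammingDist (enc c) (enc c') := by omega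
      exact_mod_cast this
    have h4 : (d : ℝ) / 12 < (n : ℝ) + 1 := by
      rw [div_lt_iff₀ (by norm_num : (0:ℝ) < 12)]
      have : (d : ℝ) < 12 * n + 12 := by exact_mod_cast hdn2
      linarith
    linarith
  · -- balance
    intro i
    have hbal := balance12 n C htc (J i) (S i)
    have hsum : (∑ v ∈ M, if v i then (1 : ℝ) else 0)
        = ((C.filter fun c => c (J i) = S i).card : ℝ) := by
      rw [hM, Finset.sum_image (fun x _ y _ h => hencinj h)]
      rw [← Finset.sum_boole]
      congr 1
      ext c
      simp [henc]
    have hMC : (M.card : ℝ) = (C.card : ℝ) := by exact_mod_cast hMcard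
    have hCpos : (0 : ℝ) < (C.card : ℝ) := by exact_mod_cast hKpos
    have hratio : (∑ v ∈ M, if v i then (1 : ℝ) else 0) / M.card = 1 / 12 := by
      rw [hsum, hMC]
      have h12 : (12 : ℝ) * ((C.filter fun c => c (J i) = S i).card : ℝ) = C.card := by
        exact_mod_cast hbal
      rw [← h12]
      have hfpos : (0 : ℝ) < ((C.filter fun c => c (J i) = S i).card : ℝ) := by
        linarith
      rw [div_eq_div_iff (by linarith) (by norm_num)]
      ring
    rw [hratio]
    norm_num
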